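/- arXiv:2005.02774 — 3 statements merged into one kernel-verified Lean document; each statement's English description precedes it below -/
import Mathlib

section
/- Let 𝔛 be a class of finite groups and suppose there exists a real number γ with 0 ≤ γ < 1 such that: for every finite group X, if the probability that two uniformly randomly chosen elements x, y of X satisfy ⟨x, y⟩ ∈ 𝔛 is greater than γ, then X ∈ 𝔛. Let m ≤ n be positive integers and let G be a finite group satisfying the condition 𝔛(m,n) but with G ∉ 𝔛. Then |G| ≤ (2/(1-γ))^m · (n-1). -/
open Finset
set_option maxHeartbeats 1000000

/-- If `𝔛` is a class of finite groups (a property closed under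
isomorphism) with the property that any finite group in which two random elements
generate an `𝔛`-group with probability greater than `γ` lies in `𝔛`, and `G` is a
finite group satisfying the condition `𝔛(m,n)` but not in `𝔛`, then
`|G| ≤ (2/(1-γ))^m * (n-1)`. -/
theorem stmt_0
    (𝔛 : ∀ (H : Type) [Group H], Prop)
    (hiso : ∀ (H K : Type) [Group H] [Group K] [Finite H] [Finite K],
      (H ≃* K) → 𝔛 H → 𝔛 K)
    (γ : ℝ) (hγ0 : 0 ≤ γ) (hγ1 : γ < 1)
    (hprob : ∀ (X : Type) [Group X] [Fintype X],
      γ < (Nat.card {p : X × X // 𝔛 (Subgroup.closure ({p.1, p.2} : Set X))} : ℝ) /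
          (Fintype.card X : ℝ) ^ 2 → 𝔛 X)
    (m n : ℕ) (hm : 0 < m) (hn : 0 < n) (hmn : m ≤ n)
    (G : Type) [Group G] [Fintype G]
    (hXmn : ∀ M N : Finset G, M.card = m → N.card = n →
      ∃ x ∈ M, ∃ y ∈ N, 𝔛 (Subgroup.closure ({x, y} : Set G)))
    (hG : ¬ 𝔛 G) :
    (Fintype.card G : ℝ) ≤ (2 / (1 - γ)) ^ m * ((n : ℝ) - 1) := by
  classical
  set Q := Fintype.card G with hQdef
  have hQ1 : 1 ≤ Q := Fintype.card_pos
  have hQR : (0:ℝ) < (Q:ℝ) := by exact_mod_cast hQ1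
  set δ : ℝ := 1 - γ with hδdef
  have hδpos : 0 < δ := by simp only [hδdef]; linarith
  set B : G → Finset G :=
    fun y => univ.filter (fun x => ¬ 𝔛 (Subgroup.closure ({x, y} : Set G))) with hBdef
  set Nt : (Fin m → G) → ℕ :=
    fun t => (univ.filter
      (fun y => ∀ i, ¬ 𝔛 (Subgroup.closure ({t i, y} : Set G)))).card with hNtdef
  -- Step 1: the number of good pairs is at most γ Q²
  have hgoodle : ¬ (γ < (Nat.card {p : G × G // 𝔛 (Subgroup.closure ({p.1, p.2} : Set G))} : ℝ) /
      (Q : ℝ) ^ 2) := fun h => hG (hprob G h)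
  have hgood' : (Nat.card {p : G × G // 𝔛 (Subgroup.closure ({p.1, p.2} : Set G))} : ℝ)
      ≤ γ * (Q:ℝ)^2 := by
    rw [not_lt, div_le_iff₀ (by positivity)] at hgoodle
    exact hgoodle
  have hcardgood : Nat.card {p : G × G // 𝔛 (Subgroup.closure ({p.1, p.2} : Set G))}
      = (univ.filter (fun p : G × G => 𝔛 (Subgroup.closure ({p.1, p.2} : Set G)))).card := by
    rw [Nat.card_eq_fintype_card, Fintype.card_subtype]
  -- Step 2: bad pairs count
  set badC := (univ.filter (fun p : G × G => ¬ 𝔛 (Subgroup.closure ({p.1, p.2} : Set G)))).card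
    with hbadCdef
  have hsplitpairs :
      (univ.filter (fun p : G × G => 𝔛 (Subgroup.closure ({p.1, p.2} : Set G)))).card + badC
        = Q * Q := by
    rw [hbadCdef, Finset.card_filter_add_card_filter_not, card_univ,
      Fintype.card_prod]
  have hbadR : δ * (Q:ℝ)^2 ≤ (badC : ℝ) := by
    have h1 : ((univ.filter (fun p : G × G => 𝔛 (Subgroup.closure ({p.1, p.2} : Set G)))).card : ℝ)
        + (badC : ℝ) = (Q:ℝ)^2 := by
      rw [sq]
      exact_mod_cast hsplitpairs
    rw [hcardgood] at hgood'
    simp only [hδdef]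
    nlinarith
  -- Step 3: sum of bad-set sizes equals badC
  have hBsum : ∑ y : G, (B y).card = badC := by
    calc ∑ y : G, (B y).card
        = ∑ y : G, ∑ x : G, if ¬ 𝔛 (Subgroup.closure ({x, y} : Set G)) then 1 else 0 := by
          simp [hBdef, Finset.card_filter]
      _ = ∑ x : G, ∑ y : G, if ¬ 𝔛 (Subgroup.closure ({x, y} : Set G)) then 1 else 0 :=
          Finset.sum_comm
      _ = ∑ p : G × G, if ¬ 𝔛 (Subgroup.closure ({p.1, p.2} : Set G)) then 1 else 0 :=
          (Fintype.sum_prod_type' (fun x y =>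
            if ¬ 𝔛 (Subgroup.closure ({x, y} : Set G)) then 1 else 0)).symm
      _ = badC := (Finset.card_filter _ _).symm
  -- Step 4: powers as tuple counts, and swap
  have hpow : ∀ y : G, (B y).card ^ m
      = (univ.filter (fun t : Fin m → G => ∀ i, t i ∈ B y)).card := by
    intro y
    have h1 : (univ.filter (fun t : Fin m → G => ∀ i, t i ∈ B y))
        = Fintype.piFinset (fun _ : Fin m => B y) := by
      ext t; simp [Fintype.mem_piFinset]
    rw [h1, Fintype.card_piFinset_const]
  have hswap : ∑ y : G, (B y).card ^ m = ∑ t : Fin m → G, Nt t := by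
    calc ∑ y : G, (B y).card ^ m
        = ∑ y : G, ∑ t : Fin m → G, if ∀ i, t i ∈ B y then 1 else 0 := by
          simp only [hpow, Finset.card_filter]
      _ = ∑ t : Fin m → G, ∑ y : G, if ∀ i, t i ∈ B y then 1 else 0 := Finset.sum_comm
      _ = ∑ t : Fin m → G, Nt t := by
          refine Finset.sum_congr rfl fun t _ => ?_
          rw [← Finset.card_filter]
          simp only [hNtdef]
          congr 1
          ext y
          simp [hBdef]
  by_cases hex : ∃ t : Fin m → G, Function.Injective t ∧ n ≤ Nt t
  · -- contradiction with hXmn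
    obtain ⟨t, htinj, htn⟩ := hex
    obtain ⟨N', hN'sub, hN'card⟩ := Finset.exists_subset_card_eq htn
    obtain ⟨x, hx, y, hy, hxy⟩ := hXmn (univ.image t) N'
      (by rw [Finset.card_image_of_injective _ htinj, card_univ, Fintype.card_fin]) hN'card
    obtain ⟨i, -, rfl⟩ := Finset.mem_image.mp hx
    exact absurd hxy ((Finset.mem_filter.mp (hN'sub hy)).2 i)
  · push_neg at hex
    -- counting bound in ℕ
    have hNtle : ∀ t : Fin m → G, Nt t ≤ Q := fun t =>
      le_trans (Finset.card_filter_le _ _) (by rw [card_univ])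
    have hcardfun : (univ : Finset (Fin m → G)).card = Q ^ m := by
      rw [card_univ, Fintype.card_fun, Fintype.card_fin]
    have hpair : ∀ i j : Fin m, i ≠ j →
        (univ.filter (fun t : Fin m → G => t i = t j)).card ≤ Q ^ (m - 1) := by
      intro i j hij
      have hc : Fintype.card ({k : Fin m // k ≠ j} → G) = Q ^ (m - 1) := by
        rw [Fintype.card_fun]
        congr 1
        rw [Fintype.card_subtype_compl, Fintype.card_subtype_eq, Fintype.card_fin]
      rw [← hc, ← card_univ]
      apply Finset.card_le_card_of_injOn (fun t (k : {k : Fin m // k ≠ j}) => t k.1)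
        (fun _ _ => mem_univ _)
      intro t1 h1 t2 h2 heq
      have e1 : t1 i = t1 j := (Finset.mem_filter.mp h1).2
      have e2 : t2 i = t2 j := (Finset.mem_filter.mp h2).2
      funext k
      by_cases hk : k = j
      · subst hk
        have := congrFun heq ⟨i, hij⟩
        simpa [← e1, ← e2] using this
      · exact congrFun heq ⟨k, hk⟩
    have hnoninj : (univ.filter (fun t : Fin m → G => ¬ Function.Injective t)).card
        ≤ (m * m - m) * Q ^ (m - 1) := by
      have hsub : univ.filter (fun t : Fin m → G => ¬ Function.Injective t)
          ⊆ (univ : Finset (Fin m)).offDiag.biUnion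
            (fun ij => univ.filter (fun t : Fin m → G => t ij.1 = t ij.2)) := by
        intro t ht
        obtain ⟨a, b, hab, hne⟩ := Function.not_injective_iff.mp (Finset.mem_filter.mp ht).2
        exact Finset.mem_biUnion.mpr ⟨(a, b), Finset.mem_offDiag.mpr
          ⟨mem_univ _, mem_univ _, hne⟩, Finset.mem_filter.mpr ⟨mem_univ _, hab⟩⟩
      calc (univ.filter (fun t : Fin m → G => ¬ Function.Injective t)).card
          ≤ ((univ : Finset (Fin m)).offDiag.biUnion
            (fun ij => univ.filter (fun t : Fin m → G => t ij.1 = t ij.2))).card :=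
            Finset.card_le_card hsub
        _ ≤ ∑ ij ∈ (univ : Finset (Fin m)).offDiag,
            (univ.filter (fun t : Fin m → G => t ij.1 = t ij.2)).card :=
            Finset.card_biUnion_le
        _ ≤ ∑ _ij ∈ (univ : Finset (Fin m)).offDiag, Q ^ (m - 1) :=
            Finset.sum_le_sum (fun ij hij => hpair ij.1 ij.2 (Finset.mem_offDiag.mp hij).2.2)
        _ = (m * m - m) * Q ^ (m - 1) := by
            rw [Finset.sum_const, smul_eq_mul, Finset.offDiag_card, card_univ, Fintype.card_fin]
    have hNsum : ∑ t : Fin m → G, Nt t ≤ ((n - 1) + (m * m - m)) * Q ^ m := by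
      have hsplit : ∑ t : Fin m → G, Nt t
          = ∑ t ∈ univ.filter (fun t : Fin m → G => Function.Injective t), Nt t
            + ∑ t ∈ univ.filter (fun t : Fin m → G => ¬ Function.Injective t), Nt t :=
        (Finset.sum_filter_add_sum_filter_not _ _ _).symm
      have h1 : ∑ t ∈ univ.filter (fun t : Fin m → G => Function.Injective t), Nt t
          ≤ Q ^ m * (n - 1) := by
        calc ∑ t ∈ univ.filter (fun t : Fin m → G => Function.Injective t), Nt t
            ≤ ∑ _t ∈ univ.filter (fun t : Fin m → G => Function.Injective t), (n - 1) :=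
              Finset.sum_le_sum (fun t ht => by
                have := hex t (Finset.mem_filter.mp ht).2; omega)
          _ = (univ.filter (fun t : Fin m → G => Function.Injective t)).card * (n - 1) := by
              rw [Finset.sum_const, smul_eq_mul]
          _ ≤ Q ^ m * (n - 1) :=
              Nat.mul_le_mul_right _ (le_trans (Finset.card_filter_le _ _) hcardfun.le)
      have h2 : ∑ t ∈ univ.filter (fun t : Fin m → G => ¬ Function.Injective t), Nt t
          ≤ ((m * m - m) * Q ^ (m - 1)) * Q := by
        calc ∑ t ∈ univ.filter (fun t : Fin m → G => ¬ Function.Injective t), Nt t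
            ≤ ∑ _t ∈ univ.filter (fun t : Fin m → G => ¬ Function.Injective t), Q :=
              Finset.sum_le_sum (fun t _ => hNtle t)
          _ = (univ.filter (fun t : Fin m → G => ¬ Function.Injective t)).card * Q := by
              rw [Finset.sum_const, smul_eq_mul]
          _ ≤ ((m * m - m) * Q ^ (m - 1)) * Q := Nat.mul_le_mul_right _ hnoninj
      have hQpow : Q ^ (m - 1) * Q = Q ^ m := by
        rw [← pow_succ]
        congr 1
        omega
      calc ∑ t : Fin m → G, Nt t ≤ Q ^ m * (n - 1) + ((m * m - m) * Q ^ (m - 1)) * Q := by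
            rw [hsplit]; exact Nat.add_le_add h1 h2
        _ = ((n - 1) + (m * m - m)) * Q ^ m := by
            rw [mul_assoc, hQpow]; ring
    have harith : (n - 1) + (m * m - m) ≤ 2 ^ m * (n - 1) := by
      have h1 : m < 2 ^ m := Nat.lt_two_pow_self
      have h2 : m * m - m = m * (m - 1) := by
        cases m with
        | zero => simp
        | succ k => rw [Nat.succ_sub_one, Nat.mul_succ, Nat.add_sub_cancel]
      have h3 : m * (m - 1) ≤ (2 ^ m - 1) * (n - 1) :=
        Nat.mul_le_mul (by omega) (by omega)
      have hC : (n - 1) ≤ 2 ^ m * (n - 1) :=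
        Nat.le_mul_of_pos_left _ (Nat.pow_pos (by norm_num))
      have h6 : (2 ^ m - 1) * (n - 1) = 2 ^ m * (n - 1) - (n - 1) := by
        rw [Nat.sub_mul, one_mul]
      calc (n - 1) + (m * m - m) ≤ (n - 1) + (2 ^ m - 1) * (n - 1) :=
            Nat.add_le_add_left (h2 ▸ h3) _
        _ = (n - 1) + (2 ^ m * (n - 1) - (n - 1)) := by rw [h6]
        _ = 2 ^ m * (n - 1) := Nat.add_sub_cancel' hC
    have hNsum2 : ∑ t : Fin m → G, Nt t ≤ 2 ^ m * (n - 1) * Q ^ m :=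
      le_trans hNsum (Nat.mul_le_mul_right _ harith)
    -- real chain
    have hJensen : (∑ y : G, ((B y).card : ℝ)) ^ m / (Q:ℝ) ^ (m - 1)
        ≤ ∑ y : G, ((B y).card : ℝ) ^ m := by
      have := pow_sum_div_card_le_sum_pow (s := (univ : Finset G))
        (f := fun y => ((B y).card : ℝ)) (fun i _ => by positivity) (m - 1)
      have hm1 : m - 1 + 1 = m := by omega
      rw [hm1] at this
      simpa [card_univ] using this
    have hBsumR : δ * (Q:ℝ)^2 ≤ ∑ y : G, ((B y).card : ℝ) := by
      have : (∑ y : G, ((B y).card : ℝ)) = (badC : ℝ) := by exact_mod_cast hBsum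
      rw [this]; exact hbadR
    have hlhs : δ ^ m * (Q:ℝ) ^ (m + 1) ≤ (∑ y : G, ((B y).card : ℝ)) ^ m / (Q:ℝ) ^ (m - 1) := by
      have hp : (δ * (Q:ℝ)^2) ^ m ≤ (∑ y : G, ((B y).card : ℝ)) ^ m :=
        pow_le_pow_left₀ (by positivity) hBsumR m
      have he : δ ^ m * (Q:ℝ) ^ (m + 1) = (δ * (Q:ℝ)^2) ^ m / (Q:ℝ) ^ (m - 1) := by
        rw [mul_pow, ← pow_mul]
        rw [eq_div_iff (by positivity), mul_assoc, ← pow_add]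
        congr 2
        omega
      rw [he]
      exact (div_le_div_iff_of_pos_right (by positivity)).mpr hp
    have hRHS : (∑ y : G, ((B y).card : ℝ) ^ m) ≤ 2 ^ m * ((n:ℝ) - 1) * (Q:ℝ) ^ m := by
      have e1 : (∑ y : G, ((B y).card : ℝ) ^ m) = ((∑ t : Fin m → G, Nt t : ℕ) : ℝ) := by
        rw [← hswap]; push_cast; ring
      have e2 : ((2 ^ m * (n - 1) * Q ^ m : ℕ) : ℝ) = 2 ^ m * ((n:ℝ) - 1) * (Q:ℝ) ^ m := by
        push_cast [Nat.cast_sub hn]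
        ring
      rw [e1, ← e2]
      exact_mod_cast hNsum2
    have hfinal : δ ^ m * (Q:ℝ) ≤ 2 ^ m * ((n:ℝ) - 1) := by
      have hchain : δ ^ m * (Q:ℝ) ^ (m + 1) ≤ 2 ^ m * ((n:ℝ) - 1) * (Q:ℝ) ^ m :=
        le_trans hlhs (le_trans hJensen hRHS)
      have hQm : (0:ℝ) < (Q:ℝ) ^ m := by positivity
      have : δ ^ m * (Q:ℝ) * (Q:ℝ) ^ m ≤ 2 ^ m * ((n:ℝ) - 1) * (Q:ℝ) ^ m := by
        calc δ ^ m * (Q:ℝ) * (Q:ℝ) ^ m = δ ^ m * (Q:ℝ) ^ (m + 1) := by ring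
          _ ≤ 2 ^ m * ((n:ℝ) - 1) * (Q:ℝ) ^ m := hchain
      exact le_of_mul_le_mul_right this hQm
    rw [div_pow, div_mul_eq_mul_div, le_div_iff₀ (pow_pos hδpos m)]
    nlinarith [hfinal]
end

section
/- Let m ≤ n be positive integers and let G be a finite group of even order. If for every two subsets M and N of G of cardinalities m and n, respectively, there exist x ∈ M and y ∈ N such that the subgroup ⟨x, y⟩ has odd order, then |G| ≤ (8/3)^m · (n-1). -/
/-- Let `m ≤ n` be positive integers and `G` a finite group of even
order. If for every two subsets `M`, `N` of `G` of cardinalities `m` and `n` there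
exist `x ∈ M`, `y ∈ N` such that `⟨x, y⟩` has odd order, then
`|G| ≤ (8/3)^m * (n-1)`. -/
theorem stmt_4
    (m n : ℕ) (hm : 0 < m) (hn : 0 < n) (hmn : m ≤ n)
    (G : Type) [Group G] [Fintype G]
    (hG : Even (Fintype.card G))
    (hXmn : ∀ M N : Finset G, M.card = m → N.card = n →
      ∃ x ∈ M, ∃ y ∈ N, Odd (Nat.card (Subgroup.closure ({x, y} : Set G)))) :
    (Fintype.card G : ℝ) ≤ (8 / 3 : ℝ) ^ m * ((n : ℝ) - 1) := by
  classical
  by_cases hcard : Fintype.card G < n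
  · -- trivial case
    have h1 : (Fintype.card G : ℝ) ≤ (n : ℝ) - 1 := by
      have h' : (Fintype.card G : ℕ) + 1 ≤ n := hcard
      have := (Nat.cast_le (α := ℝ)).2 h'
      push_cast at this
      linarith
    have h2 : (1 : ℝ) ≤ (8/3 : ℝ) ^ m := one_le_pow₀ (by norm_num)
    have h3 : (0:ℝ) ≤ (n:ℝ) - 1 := by
      have : (1:ℝ) ≤ (n:ℝ) := by exact_mod_cast hn
      linarith
    nlinarith [h1, h2, h3]
  · push_neg at hcard
    -- E : even order elements
    set E : Finset G := Finset.univ.filter (fun x => Even (orderOf x)) with hE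
    -- E.card < m
    have hEm : E.card < m := by
      by_contra h
      push_neg at h
      obtain ⟨M, hME, hMcard⟩ := Finset.exists_subset_card_eq h
      obtain ⟨N, _, hNcard⟩ := Finset.exists_subset_card_eq
        (show n ≤ Finset.univ.card by simpa using hcard)
      obtain ⟨x, hxM, y, hyN, hodd⟩ := hXmn M N hMcard hNcard
      have hxE : Even (orderOf x) := by
        have := hME hxM; simp [hE] at this; exact this
      have hxmem : x ∈ Subgroup.closure ({x, y} : Set G) :=
        Subgroup.subset_closure (Set.mem_insert x {y})
      have hdvd : orderOf x ∣ Nat.card (Subgroup.closure ({x, y} : Set G)) :=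
        Subgroup.orderOf_dvd_natCard _ hxmem
      have : Even (Nat.card (Subgroup.closure ({x, y} : Set G))) :=
        (even_iff_two_dvd).2 ((even_iff_two_dvd.1 hxE).trans hdvd)
      exact (Nat.not_even_iff_odd.2 hodd) this
    -- involution t
    have h2 : (2 : ℕ) ∣ Fintype.card G := even_iff_two_dvd.1 hG
    haveI : Fact (Nat.Prime 2) := ⟨Nat.prime_two⟩
    obtain ⟨t, ht⟩ := exists_prime_orderOf_dvd_card 2 h2
    have htE : t ∈ E := by simp [hE, ht]
    -- centralizer finset
    set Z : Finset G := Finset.univ.filter (fun g => g * t = t * g) with hZ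
    -- |G| ≤ Z.card * E.card
    have hGE : Fintype.card G ≤ Z.card * E.card := by
      have := Finset.card_le_mul_card_image_of_maps_to
        (f := fun g => g * t * g⁻¹) (s := Finset.univ) (t := E)
        (fun g _ => by
          simp only [hE, Finset.mem_filter, Finset.mem_univ, true_and]
          have hsc : SemiconjBy g t (g * t * g⁻¹) := by
            simp only [SemiconjBy]; group
          rw [← hsc.orderOf_eq g, ht]
          exact even_two) Z.card
        (fun b _ => by
          rcases Finset.eq_empty_or_nonempty (Finset.univ.filter (fun g => g * t * g⁻¹ = b)) with he | ⟨g0, hg0⟩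
          · simp [he]
          · simp only [Finset.mem_filter] at hg0
            apply Finset.card_le_card_of_injOn (fun g => g0⁻¹ * g)
            · intro g hg
              simp only [Finset.mem_coe, Finset.mem_filter, Finset.mem_univ, true_and] at hg ⊢
              simp only [hZ, Finset.mem_filter, Finset.mem_univ, true_and]
              have h' : g * t * g⁻¹ = g0 * t * g0⁻¹ := hg.trans hg0.2.symm
              have : g0⁻¹ * (g * t * g⁻¹) * g0 = t := by rw [h']; group
              have := congrArg (fun w => w * (g0⁻¹ * g)) this
              rw [← this]; group
            · intro a _ b _ hab
              exact mul_left_cancel hab)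
      simpa using this
    -- Z.card ≤ 2 * E.card
    have hZE : Z.card ≤ 2 * E.card := by
      have hsplit : Z.card = (Z.filter (fun c => Even (orderOf c))).card
          + (Z.filter (fun c => ¬ Even (orderOf c))).card :=
        (Finset.card_filter_add_card_filter_not _).symm
      have h1 : (Z.filter (fun c => Even (orderOf c))).card ≤ E.card := by
        apply Finset.card_le_card
        intro c hc
        simp only [Finset.mem_filter] at hc
        simp [hE, hc.2]
      have h2 : (Z.filter (fun c => ¬ Even (orderOf c))).card ≤ E.card := by
        apply Finset.card_le_card_of_injOn (fun c => t * c)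
        · intro c hc
          simp only [Finset.mem_coe, Finset.mem_filter, hZ, Finset.mem_univ, true_and] at hc
          obtain ⟨hcomm, hoddc⟩ := hc
          rw [Nat.not_even_iff_odd] at hoddc
          simp only [Finset.mem_coe, hE, Finset.mem_filter, Finset.mem_univ, true_and]
          -- (t*c)^(orderOf c) = t since commute
          have hcom : Commute t c := hcomm.symm
          have ht2 : t ^ 2 = 1 := by rw [← ht]; exact pow_orderOf_eq_one t
          have hpow : (t * c) ^ (orderOf c) = t := by
            rw [hcom.mul_pow, pow_orderOf_eq_one, mul_one]
            obtain ⟨k, hk⟩ := hoddc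
            rw [hk, pow_add, pow_mul, ht2, one_pow, one_mul, pow_one]
          have : orderOf ((t*c) ^ orderOf c) ∣ orderOf (t*c) := orderOf_pow_dvd _
          rw [hpow, ht] at this
          exact even_iff_two_dvd.2 this
        · intro a _ b _ hab
          exact mul_left_cancel hab
      omega
    -- conclude numerically
    have hfin : Fintype.card G ≤ 2 * (m-1) * (m-1) := by
      calc Fintype.card G ≤ Z.card * E.card := hGE
        _ ≤ (2 * E.card) * E.card := Nat.mul_le_mul_right _ hZE
        _ ≤ 2 * (m-1) * (m-1) := by
            have : E.card ≤ m - 1 := by omega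
            exact Nat.mul_le_mul (Nat.mul_le_mul_left 2 this) this
    -- m ≥ 2 since t ∈ E so E.card ≥ 1
    have hm2 : 2 ≤ m := by
      have : 1 ≤ E.card := Finset.card_pos.2 ⟨t, htE⟩
      omega
    -- 2*(m-1) ≤ 2^m ≤ (8/3)^m, m-1 ≤ n-1
    have key : ((2 * (m-1) * (m-1) : ℕ) : ℝ) ≤ (8/3:ℝ)^m * ((n:ℝ)-1) := by
      have hn1 : ((m:ℝ) - 1) ≤ (n:ℝ) - 1 := by
        have : (m:ℝ) ≤ n := by exact_mod_cast hmn
        linarith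
      have hml : 2 * (m - 1) ≤ 2 ^ m := by
        have := Nat.lt_two_pow_self (n := m - 1)
        calc 2 * (m-1) ≤ 2 * 2 ^ (m-1) := by omega
          _ = 2 ^ (m - 1 + 1) := by ring
          _ = 2 ^ m := by congr 1; omega
      have hml' : (2 * ((m:ℝ) - 1)) ≤ (2:ℝ) ^ m := by
        have := (Nat.cast_le (α := ℝ)).2 hml
        push_cast [Nat.cast_sub (by omega : 1 ≤ m)] at this
        linarith
      have hpow : (2:ℝ) ^ m ≤ (8/3:ℝ) ^ m := by
        apply pow_le_pow_left₀ (by norm_num) (by norm_num)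
      have hm1 : (0:ℝ) ≤ (m:ℝ) - 1 := by
        have : (1:ℝ) ≤ (m:ℝ) := by exact_mod_cast hm
        linarith
      have : ((2 * (m-1) * (m-1) : ℕ) : ℝ) = 2 * ((m:ℝ)-1) * ((m:ℝ)-1) := by
        push_cast [Nat.cast_sub (by omega : 1 ≤ m)]; ring
      rw [this]
      calc 2 * ((m:ℝ)-1) * ((m:ℝ)-1) ≤ (8/3:ℝ)^m * ((m:ℝ)-1) :=
            mul_le_mul_of_nonneg_right (hml'.trans hpow) hm1
        _ ≤ (8/3:ℝ)^m * ((n:ℝ)-1) :=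
            mul_le_mul_of_nonneg_left hn1 (by positivity)
    calc (Fintype.card G : ℝ) ≤ ((2 * (m-1) * (m-1) : ℕ) : ℝ) := by exact_mod_cast hfin
      _ ≤ _ := key
end

section
/- Let 𝔛 be a class of finite groups and suppose there exists a real number γ with 0 ≤ γ < 1 such that: for every finite group X, if the probability that two uniformly randomly chosen elements x, y of X satisfy ⟨x, y⟩ ∈ 𝔛 is greater than γ, then X ∈ 𝔛. Let m ≤ n be positive integers and let G be a finite group satisfying the condition 𝔛(m,n) with G ∉ 𝔛. Then ((n-1)/|G|)^{1/m} + (m-1)/|G| ≥ 1 - γ. -/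
open Finset

/-- If `𝔛` is a class of finite groups with the property that any
finite group in which two random elements generate an `𝔛`-group with probability
greater than `γ` lies in `𝔛`, `m ≤ n` are positive integers and `G` is a finite
group satisfying the condition `𝔛(m,n)` but not in `𝔛`, then
`((n-1)/|G|)^(1/m) + (m-1)/|G| ≥ 1 - γ`. -/
theorem stmt_8
    (𝔛 : ∀ (H : Type) [Group H], Prop)
    (hiso : ∀ (H K : Type) [Group H] [Group K] [Finite H] [Finite K],
      (H ≃* K) → 𝔛 H → 𝔛 K)
    (γ : ℝ) (hγ0 : 0 ≤ γ) (hγ1 : γ < 1)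
    (hprob : ∀ (X : Type) [Group X] [Fintype X],
      γ < (Nat.card {p : X × X // 𝔛 (Subgroup.closure ({p.1, p.2} : Set X))} : ℝ) /
          (Fintype.card X : ℝ) ^ 2 → 𝔛 X)
    (m n : ℕ) (hm : 0 < m) (hn : 0 < n) (hmn : m ≤ n)
    (G : Type) [Group G] [Fintype G]
    (hXmn : ∀ M N : Finset G, M.card = m → N.card = n →
      ∃ x ∈ M, ∃ y ∈ N, 𝔛 (Subgroup.closure ({x, y} : Set G)))
    (hG : ¬ 𝔛 G) :
    1 - γ ≤ (((n : ℝ) - 1) / (Fintype.card G : ℝ)) ^ ((1 : ℝ) / (m : ℝ)) +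
      ((m : ℝ) - 1) / (Fintype.card G : ℝ) := by
  classical
  set g : ℕ := Fintype.card G with hgdef
  have hgpos : 0 < g := Fintype.card_pos
  have hgR : (0:ℝ) < (g:ℝ) := by exact_mod_cast hgpos
  set R : G → G → Prop := fun a b => 𝔛 (Subgroup.closure ({a, b} : Set G)) with hRdef
  have hRsymm : ∀ a b, R a b → R b a := by
    intro a b h
    show 𝔛 (Subgroup.closure ({b, a} : Set G))
    rw [Set.pair_comm b a]
    exact h
  set Nb : G → Finset G := fun x => univ.filter (fun y => ¬ R x y) with hNb
  set d : G → ℕ := fun x => (Nb x).card with hd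
  -- Each `m`-subset has at most `n-1` "common non-neighbours".
  have key : ∀ S : Finset G, S.card = m →
      (univ.filter (fun x => S ⊆ Nb x)).card ≤ n - 1 := by
    intro S hS
    by_contra hc
    push_neg at hc
    have hn' : n ≤ (univ.filter (fun x => S ⊆ Nb x)).card := by omega
    obtain ⟨T, hT, hTcard⟩ := Finset.exists_subset_card_eq hn'
    obtain ⟨x, hxS, y, hyT, hxy⟩ := hXmn S T hS hTcard
    have hy := hT hyT
    rw [mem_filter] at hy
    have hxmem : x ∈ Nb y := hy.2 hxS
    simp only [hNb, mem_filter] at hxmem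
    exact hxmem.2 (hRsymm x y hxy)
  -- double counting
  have count : ∑ x : G, (d x).choose m ≤ (n - 1) * g.choose m := by
    calc (∑ x : G, (d x).choose m)
        = ∑ x : G, ∑ S ∈ univ.powersetCard m, (if S ⊆ Nb x then 1 else 0) := by
          refine Finset.sum_congr rfl fun x _ => ?_
          have hps : (Nb x).powersetCard m = (univ.powersetCard m).filter (fun S => S ⊆ Nb x) := by
            ext S
            simp only [Finset.mem_powersetCard, Finset.mem_filter, Finset.subset_univ,
              true_and, and_comm]
          rw [hd, ← Finset.card_powersetCard, hps, Finset.card_filter]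
      _ = ∑ S ∈ univ.powersetCard m, ∑ x : G, (if S ⊆ Nb x then 1 else 0) :=
          Finset.sum_comm
      _ = ∑ S ∈ univ.powersetCard m, (univ.filter (fun x => S ⊆ Nb x)).card := by
          refine Finset.sum_congr rfl fun S _ => ?_
          rw [Finset.card_filter]
      _ ≤ ∑ _S ∈ univ.powersetCard m, (n - 1) := by
          refine Finset.sum_le_sum fun S hS => key S ?_
          exact (Finset.mem_powersetCard.mp hS).2
      _ = (univ.powersetCard m).card * (n - 1) := by
          rw [Finset.sum_const, smul_eq_mul]
      _ = (n - 1) * g.choose m := by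
          rw [Finset.card_powersetCard, card_univ, Nat.mul_comm]
  -- total number of non-`𝔛` pairs
  set e : ℕ := ∑ x : G, d x with he
  -- relate to the `𝔛`-pair count
  have hcards : Nat.card {p : G × G // 𝔛 (Subgroup.closure ({p.1, p.2} : Set G))} + e
      = g ^ 2 := by
    have h1 : Nat.card {p : G × G // 𝔛 (Subgroup.closure ({p.1, p.2} : Set G))}
        = Fintype.card {p : G × G // R p.1 p.2} := by
      rw [Nat.card_eq_fintype_card]
    have h2 : e = Fintype.card {p : G × G // ¬ R p.1 p.2} := by
      rw [Fintype.card_congr (Equiv.subtypeProdEquivSigmaSubtype (fun a b => ¬ R a b)),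
        Fintype.card_sigma]
      refine Finset.sum_congr rfl fun x _ => ?_
      rw [hd, hNb]
      simp [Fintype.card_subtype]
    rw [h1, h2, Fintype.card_subtype, Fintype.card_subtype,
      Finset.card_filter_add_card_filter_not, card_univ, Fintype.card_prod, hgdef,
      sq]
  -- from `hG`, the `𝔛`-pair count is at most `γ g²`, so `e ≥ (1-γ) g²`.
  have hlow : (1 - γ) * (g:ℝ) ^ 2 ≤ (e : ℝ) := by
    have hnle : ¬ γ < (Nat.card {p : G × G // 𝔛 (Subgroup.closure ({p.1, p.2} : Set G))} : ℝ) /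
        (Fintype.card G : ℝ) ^ 2 := fun h => hG (hprob G h)
    push_neg at hnle
    rw [div_le_iff₀ (by positivity)] at hnle
    have : (Nat.card {p : G × G // 𝔛 (Subgroup.closure ({p.1, p.2} : Set G))} : ℝ) + (e:ℝ)
        = (g:ℝ)^2 := by exact_mod_cast congrArg (Nat.cast : ℕ → ℝ) hcards
    nlinarith
  have hfirst_nonneg : (0:ℝ) ≤ (((n : ℝ) - 1) / (g : ℝ)) ^ ((1 : ℝ) / (m : ℝ)) := by
    apply Real.rpow_nonneg
    apply div_nonneg _ (le_of_lt hgR)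
    have : (1:ℝ) ≤ (n:ℝ) := by exact_mod_cast hn
    linarith
  rcases le_or_gt (e : ℝ) (((m:ℝ) - 1) * g) with hcase | hcase
  · -- easy case
    have h1 : (1 - γ) * (g:ℝ)^2 ≤ ((m:ℝ) - 1) * g := le_trans hlow hcase
    have h2 : 1 - γ ≤ ((m:ℝ) - 1) / g := by
      rw [le_div_iff₀ hgR]
      nlinarith
    linarith
  · -- main case: Jensen + counting
    set z : G → ℕ := fun x => d x + 1 - m with hz
    have hzsum : (e:ℝ) - ((m:ℝ) - 1) * g ≤ ∑ x : G, (z x : ℝ) := by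
      have : ∀ x : G, (d x : ℝ) - ((m:ℝ) - 1) ≤ (z x : ℝ) := by
        intro x
        rcases le_or_gt m (d x + 1) with h | h
        · rw [hz]
          push_cast [Nat.cast_sub h]
          ring_nf
          linarith
        · have hz0 : z x = 0 := by simp only [hz]; omega
          rw [hz0]
          have : (d x : ℝ) + 1 - m ≤ 0 := by
            have : (d x : ℝ) + 1 < m := by exact_mod_cast h
            linarith
          push_cast
          linarith
      calc ((e:ℝ) - ((m:ℝ) - 1) * g) = ∑ x : G, ((d x : ℝ) - ((m:ℝ)-1)) := by
            rw [Finset.sum_sub_distrib, Finset.sum_const, card_univ, ← hgdef]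
            push_cast [he]
            ring
        _ ≤ ∑ x : G, (z x : ℝ) := Finset.sum_le_sum fun x _ => this x
    have hzpow : ∑ x : G, (z x : ℝ) ^ m ≤ ((n:ℝ) - 1) * (g:ℝ) ^ m := by
      have hnat : ∑ x : G, z x ^ m ≤ (n - 1) * g ^ m := by
        calc (∑ x : G, z x ^ m) ≤ ∑ x : G, (d x).descFactorial m :=
              Finset.sum_le_sum fun x _ => Nat.pow_sub_le_descFactorial (d x) m
          _ = ∑ x : G, Nat.factorial m * (d x).choose m :=
              Finset.sum_congr rfl fun x _ => Nat.descFactorial_eq_factorial_mul_choose _ _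
          _ = Nat.factorial m * ∑ x : G, (d x).choose m := by rw [Finset.mul_sum]
          _ ≤ Nat.factorial m * ((n - 1) * g.choose m) := Nat.mul_le_mul_left _ count
          _ = (n - 1) * (Nat.factorial m * g.choose m) := by ring
          _ = (n - 1) * g.descFactorial m := by
              rw [Nat.descFactorial_eq_factorial_mul_choose]
          _ ≤ (n - 1) * g ^ m := Nat.mul_le_mul_left _ (Nat.descFactorial_le_pow g m)
      calc (∑ x : G, (z x : ℝ) ^ m) = (((∑ x : G, z x ^ m) : ℕ) : ℝ) := by push_cast; ring_nf
        _ ≤ ((((n - 1) * g ^ m) : ℕ) : ℝ) := by exact_mod_cast hnat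
        _ = ((n:ℝ) - 1) * (g:ℝ) ^ m := by
            push_cast [Nat.cast_sub hn]
            ring
    -- Jensen (power mean)
    obtain ⟨k, hk⟩ : ∃ k, m = k + 1 := ⟨m - 1, by omega⟩
    have hjensen : (∑ x : G, (z x : ℝ)) ^ m / (g:ℝ) ^ (m - 1) ≤ ∑ x : G, (z x : ℝ) ^ m := by
      have := pow_sum_div_card_le_sum_pow (s := (univ : Finset G))
        (f := fun x => (z x : ℝ)) (fun i _ => by positivity) k
      rw [card_univ] at this
      simpa [hk, hgdef] using this
    set a : ℝ := (e:ℝ) - ((m:ℝ) - 1) * g with ha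
    have hapos : 0 < a := by rw [ha]; linarith
    have hstep : a ^ m ≤ ((n:ℝ) - 1) * (g:ℝ) ^ (2 * m - 1) := by
      have h1 : a ^ m ≤ (∑ x : G, (z x : ℝ)) ^ m :=
        pow_le_pow_left₀ (le_of_lt hapos) hzsum m
      have h2 : (∑ x : G, (z x : ℝ)) ^ m ≤ (g:ℝ) ^ (m-1) * (((n:ℝ) - 1) * (g:ℝ) ^ m) := by
        rw [div_le_iff₀ (by positivity)] at hjensen
        calc ((∑ x : G, (z x : ℝ)) ^ m) ≤ (∑ x : G, (z x : ℝ)^m) * (g:ℝ)^(m-1) := hjensen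
          _ ≤ ((n:ℝ) - 1) * (g:ℝ) ^ m * (g:ℝ)^(m-1) := by
              apply mul_le_mul_of_nonneg_right hzpow (by positivity)
          _ = (g:ℝ) ^ (m-1) * (((n:ℝ) - 1) * (g:ℝ) ^ m) := by ring
      calc a ^ m ≤ (g:ℝ) ^ (m-1) * (((n:ℝ) - 1) * (g:ℝ) ^ m) := le_trans h1 h2
        _ = ((n:ℝ) - 1) * (g:ℝ) ^ (2*m - 1) := by
            rw [show 2*m - 1 = (m-1) + m by omega, pow_add]
            ring
    -- take m-th roots
    have hroot : a ≤ (((n:ℝ) - 1) / (g:ℝ)) ^ ((1:ℝ)/(m:ℝ)) * (g:ℝ)^2 := by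
      have hmR : (0:ℝ) < (m:ℝ) := by exact_mod_cast hm
      have h1 : a = (a ^ m) ^ ((1:ℝ)/(m:ℝ)) := by
        rw [← Real.rpow_natCast a m, ← Real.rpow_mul (le_of_lt hapos)]
        rw [mul_one_div, div_self (ne_of_gt hmR), Real.rpow_one]
      have hb : ((n:ℝ) - 1) * (g:ℝ) ^ (2*m-1) = (((n:ℝ)-1)/(g:ℝ)) * (g:ℝ)^(2*m) := by
        rw [show 2*m = (2*m-1)+1 by omega, pow_succ]
        field_simp
        ring_nf
        rw [Nat.add_sub_cancel_left]
      have h2 : (a ^ m) ^ ((1:ℝ)/(m:ℝ)) ≤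
          ((((n:ℝ)-1)/(g:ℝ)) * (g:ℝ)^(2*m)) ^ ((1:ℝ)/(m:ℝ)) := by
        apply Real.rpow_le_rpow (by positivity) _ (by positivity)
        rw [← hb]; exact hstep
      have hnn : (0:ℝ) ≤ ((n:ℝ)-1)/(g:ℝ) := by
        apply div_nonneg _ (le_of_lt hgR)
        have : (1:ℝ) ≤ (n:ℝ) := by exact_mod_cast hn
        linarith
      have h3 : ((((n:ℝ)-1)/(g:ℝ)) * (g:ℝ)^(2*m)) ^ ((1:ℝ)/(m:ℝ)) =
          (((n:ℝ)-1)/(g:ℝ)) ^ ((1:ℝ)/(m:ℝ)) * (g:ℝ)^2 := by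
        rw [Real.mul_rpow hnn (by positivity)]
        congr 1
        rw [← Real.rpow_natCast (g:ℝ) (2*m), ← Real.rpow_mul (le_of_lt hgR)]
        have hexp : ((2*m : ℕ) : ℝ) * ((1:ℝ)/(m:ℝ)) = ((2:ℕ) : ℝ) := by
          push_cast
          field_simp
        rw [hexp, Real.rpow_natCast]
      rw [h1, ← h3]
      exact h2
    -- conclude
    have : (1 - γ) * (g:ℝ)^2 ≤ (((n:ℝ) - 1) / (g:ℝ)) ^ ((1:ℝ)/(m:ℝ)) * (g:ℝ)^2
        + ((m:ℝ) - 1) * g := by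
      have := hroot
      rw [ha] at this
      linarith
    have hg2 : (0:ℝ) < (g:ℝ)^2 := by positivity
    have hmg : ((m:ℝ)-1)/(g:ℝ) * (g:ℝ)^2 = ((m:ℝ)-1) * g := by
      field_simp
    have hfin : (1-γ) * (g:ℝ)^2 ≤
        ((((n:ℝ)-1)/(g:ℝ))^((1:ℝ)/(m:ℝ)) + ((m:ℝ)-1)/(g:ℝ)) * (g:ℝ)^2 := by
      rw [add_mul, hmg]
      linarith
    exact le_of_mul_le_mul_right hfin hg2
end
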